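/- Energy dissipation with damping (matrix version): Let M, B, K ∈ ℝ^{m×m} with M symmetric positive definite, B symmetric positive semidefinite, K symmetric positive semidefinite, and suppose (E^n) satisfies M ∂_{ττ}E^n + B ∂_τÊ^n + K E^n = 0, where ∂_τÊ^n = (E^{n+1}−E^{n-1})/(2τ). Then the discrete energy E_n := dₙᵀMdₙ + aₙᵀKaₙ − (τ²/4)dₙᵀKdₙ (with dₙ = (E^{n+1}−E^n)/τ, aₙ = (E^{n+1}+E^n)/2) satisfies E_n + 2τ Σ_{k=1}^{n} (∂_τÊ^k)ᵀ B (∂_τÊ^k) = E_0, in particular E_n ≤ E_0 is nonincreasing. -/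

import Mathlib

open Matrix

lemma symdot {m : ℕ} (A : Matrix (Fin m) (Fin m) ℝ) (hA : Aᵀ = A) (x y : Fin m → ℝ) :
    x ⬝ᵥ A.mulVec y = y ⬝ᵥ A.mulVec x := by
  rw [Matrix.dotProduct_mulVec, ← hA, Matrix.vecMul_transpose, dotProduct_comm, hA]

lemma sdot {m : ℕ} (A : Matrix (Fin m) (Fin m) ℝ) (c : ℝ) (x y : Fin m → ℝ) :
    (c • x) ⬝ᵥ A.mulVec (c • y) = c * c * (x ⬝ᵥ A.mulVec y) := by
  rw [Matrix.mulVec_smul, smul_dotProduct, dotProduct_smul]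
  simp [smul_eq_mul]; ring

lemma step_lem {m : ℕ} (τ : ℝ) (hτ : 0 < τ) (M B K : Matrix (Fin m) (Fin m) ℝ)
    (hM : Mᵀ = M) (hK : Kᵀ = K) (u v w : Fin m → ℝ)
    (h : M.mulVec ((τ^2)⁻¹ • (u - (2:ℝ) • v + w))
        + B.mulVec ((2*τ)⁻¹ • (u - w)) + K.mulVec v = 0) :
    ((τ⁻¹ • (u - v)) ⬝ᵥ M.mulVec (τ⁻¹ • (u - v))
      + ((1/2:ℝ) • (u + v)) ⬝ᵥ K.mulVec ((1/2:ℝ) • (u + v))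
      - τ^2/4 * ((τ⁻¹ • (u - v)) ⬝ᵥ K.mulVec (τ⁻¹ • (u - v))))
    + 2*τ * (((2*τ)⁻¹ • (u - w)) ⬝ᵥ B.mulVec ((2*τ)⁻¹ • (u - w)))
    = ((τ⁻¹ • (v - w)) ⬝ᵥ M.mulVec (τ⁻¹ • (v - w))
      + ((1/2:ℝ) • (v + w)) ⬝ᵥ K.mulVec ((1/2:ℝ) • (v + w))
      - τ^2/4 * ((τ⁻¹ • (v - w)) ⬝ᵥ K.mulVec (τ⁻¹ • (v - w)))) := by
  have hτ' : τ ≠ 0 := ne_of_gt hτ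
  have h0 := congrArg (fun z => (u - w) ⬝ᵥ z) h
  simp only [dotProduct_add, Matrix.mulVec_smul, dotProduct_smul, Matrix.mulVec_add,
    Matrix.mulVec_sub, dotProduct_sub, sub_dotProduct, add_dotProduct, dotProduct_zero,
    smul_eq_mul, Matrix.smul_mulVec] at h0
  field_simp at h0
  rw [sdot, sdot, sdot, sdot, sdot, sdot, sdot]
  apply mul_left_cancel₀ (a := 4*τ^2) (by positivity)
  field_simp
  have sMuv := symdot M hM u v
  have sMuw := symdot M hM u w
  have sMvw := symdot M hM v w
  have sKuv := symdot K hK u v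
  have sKvw := symdot K hK v w
  simp only [Matrix.mulVec_sub, Matrix.mulVec_add, dotProduct_sub, dotProduct_add, sub_dotProduct, add_dotProduct]
  linear_combination 8 * h0 + 16*(sMuv + sMvw - sMuw) + - (8*τ^2)*(sKuv + sKvw)

/-- discrete energy dissipation for the damped leapfrog scheme. -/
theorem stmt_19 {m : ℕ} (τ : ℝ) (hτ : 0 < τ)
    (M B K : Matrix (Fin m) (Fin m) ℝ)
    (hM : M.PosDef) (hB : B.PosSemidef) (hK : K.PosSemidef)
    (E : ℕ → Fin m → ℝ)
    (hrec : ∀ n, 1 ≤ n →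
      M.mulVec ((τ^2)⁻¹ • (E (n+1) - (2:ℝ) • E n + E (n-1)))
        + B.mulVec ((2*τ)⁻¹ • (E (n+1) - E (n-1))) + K.mulVec (E n) = 0) :
    ∀ n : ℕ,
      let d := fun j : ℕ => τ⁻¹ • (E (j+1) - E j)
      let a := fun j : ℕ => (1/2 : ℝ) • (E (j+1) + E j)
      let dhat := fun j : ℕ => (2*τ)⁻¹ • (E (j+1) - E (j-1))
      let En := fun j : ℕ =>
        d j ⬝ᵥ M.mulVec (d j) + a j ⬝ᵥ K.mulVec (a j) - τ^2/4 * (d j ⬝ᵥ K.mulVec (d j))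
      (En n + 2*τ * ∑ k ∈ Finset.Icc 1 n, dhat k ⬝ᵥ B.mulVec (dhat k) = En 0) ∧
      En n ≤ En 0 := by
  have hMt : Mᵀ = M := by
    have := hM.1; simpa [Matrix.IsHermitian, Matrix.conjTranspose_eq_transpose_of_trivial] using this
  have hKt : Kᵀ = K := by
    have := hK.1; simpa [Matrix.IsHermitian, Matrix.conjTranspose_eq_transpose_of_trivial] using this
  intro n d a dhat En
  have hBnn : ∀ x : Fin m → ℝ, 0 ≤ x ⬝ᵥ B.mulVec x := by
    intro x; have := hB.dotProduct_mulVec_nonneg x; simpa using this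
  have main : ∀ n : ℕ,
      En n + 2*τ * ∑ k ∈ Finset.Icc 1 n, dhat k ⬝ᵥ B.mulVec (dhat k) = En 0 := by
    intro n
    induction n with
    | zero => simp
    | succ n ih =>
      rw [Finset.sum_Icc_succ_top (by omega : 1 ≤ n + 1)]
      have hs := step_lem τ hτ M B K hMt hKt (E (n+2)) (E (n+1)) (E n)
        (by simpa using hrec (n+1) (by omega))
      have hEn1 : En (n+1) + 2*τ * (dhat (n+1) ⬝ᵥ B.mulVec (dhat (n+1))) = En n := by
        simpa [En, d, a, dhat] using hs
      rw [mul_add]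
      linarith [ih, hEn1]
  refine ⟨main n, ?_⟩
  have hsum : 0 ≤ ∑ k ∈ Finset.Icc 1 n, dhat k ⬝ᵥ B.mulVec (dhat k) :=
    Finset.sum_nonneg fun k _ => hBnn (dhat k)
  nlinarith [main n]
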